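/- Given 0 < σ < m_min and integer n ≥ 2, set τ = (0.81 e^{−3/2}/Ω)(σ/m_min)^{1/(2n−2)}. There exist complex amplitudes a_1, …, a_{2n−1} with |a_j| ≥ m_min and points t_j = (−n+j)τ·e_1 ∈ R^k (j = 1, …, 2n−1, where e_1 is the first standard basis vector) such that the measures μ = Σ_{j=1}^n a_j δ_{t_j} (n points) and μ̂ = Σ_{j=n+1}^{2n−1} (−a_j) δ_{t_j} (n−1 points) satisfy |F μ̂(ω) − F μ(ω)| < σ for all ω ∈ R^k with ||ω||_2 ≤ Ω; moreover μ has minimum amplitude m_min and minimum support separation τ. -/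

import Mathlib

open Real Complex Finset

/-- `τ = (0.81 e^{−3/2}/Ω)(σ/m_min)^{1/(2n−2)}`. -/
noncomputable def tauVal (Ω σ mmin : ℝ) (n : ℕ) : ℝ :=
  0.81 * Real.exp (-(3 / 2)) / Ω * (σ / mmin) ^ ((1 : ℝ) / (2 * (n : ℝ) - 2))

/-- The point `(−n+j)τ·e₁ ∈ ℝ^k` (with the 1-based index `j` replaced by the 0-based
index `j` of `Fin (2n−1)`, so the coefficient is `(j+1−n)τ`). -/
noncomputable def tPt (k n : ℕ) (hk : 1 ≤ k) (τ : ℝ) (j : Fin (2 * n - 1)) :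
    EuclideanSpace ℝ (Fin k) :=
  EuclideanSpace.single ⟨0, hk⟩ (((j : ℝ) + 1 - (n : ℝ)) * τ)

lemma aux_cos (θ : ℝ) : 2 - 2 * Real.cos θ ≤ θ ^ 2 := by
  have h := Real.abs_sin_le_abs (x := θ / 2)
  rw [Real.abs_sin_half] at h
  have h2 : 0 ≤ (1 - Real.cos θ) / 2 := by nlinarith [Real.cos_le_one θ]
  have h3 := Real.sq_sqrt h2
  nlinarith [Real.sqrt_nonneg ((1 - Real.cos θ) / 2), _root_.sq_abs (θ / 2)]

lemma aux_exp (θ : ℝ) : ‖1 - Complex.exp (Complex.I * θ)‖ ≤ |θ| := by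
  rw [norm_sub_rev]
  have h1 : ‖Complex.exp (Complex.I * θ) - 1‖
      = Real.sqrt (2 - 2 * Real.cos θ) := by
    rw [Complex.norm_def]
    congr 1
    simp only [Complex.normSq_apply, Complex.sub_re, Complex.sub_im, Complex.exp_re,
      Complex.exp_im, Complex.mul_re, Complex.mul_im, Complex.I_re, Complex.I_im,
      Complex.ofReal_re, Complex.ofReal_im, Complex.one_re, Complex.one_im]
    simp only [zero_mul, one_mul, mul_zero, sub_zero, zero_add, Real.exp_zero]
    nlinarith [Real.sin_sq_add_cos_sq θ]
  rw [h1, ← Real.sqrt_sq_eq_abs]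
  exact Real.sqrt_le_sqrt (aux_cos θ)


/-- Lower bound construction for the number-detection resolution limit: given
`0 < σ < m_min`, `n ≥ 2` and `τ = (0.81 e^{−3/2}/Ω)(σ/m_min)^{1/(2n−2)}`, there exist
amplitudes `a_j` with `|a_j| ≥ m_min` at points `t_j = (−n+j)τ e₁`, `j = 1, …, 2n−1`, so
that the `n`-point measure `μ = Σ_{j≤n} a_j δ_{t_j}` and the `(n−1)`-point measure
`μ̂ = Σ_{j>n} (−a_j) δ_{t_j}` satisfy `|Fμ̂(ω) − Fμ(ω)| < σ` for all `‖ω‖ ≤ Ω`; moreover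
`μ` has minimum amplitude `m_min` and minimum support separation `τ`. -/
theorem number_detection_lower_bound (k n : ℕ) (hk : 1 ≤ k) (hn : 2 ≤ n)
    (Ω σ mmin : ℝ) (hΩ : 0 < Ω) (hσ : 0 < σ) (hσm : σ < mmin) :
    ∃ a : Fin (2 * n - 1) → ℂ,
      (∀ j, mmin ≤ ‖a j‖) ∧
      (∃ j : Fin (2 * n - 1), (j : ℕ) < n ∧ ‖a j‖ = mmin) ∧
      (∀ p j : Fin (2 * n - 1), (p : ℕ) < n → (j : ℕ) < n → p ≠ j →
        tauVal Ω σ mmin n ≤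
          ‖tPt k n hk (tauVal Ω σ mmin n) p - tPt k n hk (tauVal Ω σ mmin n) j‖) ∧
      (∃ p j : Fin (2 * n - 1), (p : ℕ) < n ∧ (j : ℕ) < n ∧ p ≠ j ∧
        ‖tPt k n hk (tauVal Ω σ mmin n) p - tPt k n hk (tauVal Ω σ mmin n) j‖
          = tauVal Ω σ mmin n) ∧
      (∀ ω : EuclideanSpace ℝ (Fin k), ‖ω‖ ≤ Ω →
        ‖(∑ j ∈ Finset.univ.filter (fun j : Fin (2 * n - 1) => n ≤ (j : ℕ)),
              (-(a j)) * Complex.exp (Complex.I *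
                ((inner ℝ (tPt k n hk (tauVal Ω σ mmin n) j) ω : ℝ) : ℂ))) -
            ∑ j ∈ Finset.univ.filter (fun j : Fin (2 * n - 1) => (j : ℕ) < n),
              a j * Complex.exp (Complex.I *
                ((inner ℝ (tPt k n hk (tauVal Ω σ mmin n) j) ω : ℝ) : ℂ))‖ < σ) := by
  have hmm : (0:ℝ) < mmin := hσ.trans hσm
  set τ := tauVal Ω σ mmin n with hτdef
  set c : ℝ := 0.81 * Real.exp (-(3 / 2)) with hcdef
  set s : ℝ := (σ / mmin) ^ ((1 : ℝ) / (2 * (n : ℝ) - 2)) with hsdef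
  have hsx : (0:ℝ) < σ / mmin := div_pos hσ hmm
  have hc0 : (0:ℝ) < c := by
    have := Real.exp_pos (-(3/2 : ℝ)); rw [hcdef]; nlinarith
  have hc1 : c < 1 := by
    have h1 : Real.exp (-(3/2 : ℝ)) < 1 := by
      rw [← Real.exp_zero]; exact Real.exp_lt_exp.mpr (by norm_num)
    have := Real.exp_pos (-(3/2 : ℝ)); rw [hcdef]; nlinarith
  have hs0 : (0:ℝ) < s := Real.rpow_pos_of_pos hsx _
  have hτ0 : (0:ℝ) < τ := by
    rw [hτdef]; unfold tauVal
    exact mul_pos (div_pos hc0 hΩ) hs0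
  refine ⟨fun j => (mmin : ℂ) * (-1) ^ (j : ℕ) * ((2 * n - 2).choose (j : ℕ) : ℂ),
    ?_, ?_, ?_, ?_, ?_⟩
  · intro j
    simp only [norm_mul, norm_pow, norm_neg, norm_one, one_pow, mul_one,
      Complex.norm_real, Real.norm_eq_abs, Complex.norm_natCast, abs_of_pos hmm]
    have hj : (j : ℕ) ≤ 2 * n - 2 := by have := j.isLt; omega
    have h1 : 1 ≤ (2 * n - 2).choose (j : ℕ) := Nat.one_le_iff_ne_zero.mpr
      (Nat.choose_pos hj).ne'
    have : (1:ℝ) ≤ ((2 * n - 2).choose (j : ℕ) : ℝ) := by exact_mod_cast h1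
    nlinarith
  · refine ⟨⟨0, by omega⟩, show (0:ℕ) < n by omega, ?_⟩
    simp [abs_of_pos hmm]
  · intro p j hp hj hpj
    have hsub : tPt k n hk τ p - tPt k n hk τ j
        = EuclideanSpace.single ⟨0, hk⟩ ((((p:ℕ):ℝ) - ((j:ℕ):ℝ)) * τ) := by
      unfold tPt
      ext i
      simp [EuclideanSpace.single_apply]
      split <;> ring
    rw [hsub, EuclideanSpace.norm_single, Real.norm_eq_abs, abs_mul, abs_of_pos hτ0]
    have hne : ((p:ℕ):ℤ) - ((j:ℕ):ℤ) ≠ 0 := by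
      have : (p:ℕ) ≠ (j:ℕ) := fun h => hpj (Fin.ext h)
      omega
    have h1 : (1:ℤ) ≤ |((p:ℕ):ℤ) - ((j:ℕ):ℤ)| := Int.one_le_abs hne
    have h2 : (1:ℝ) ≤ |((p:ℕ):ℝ) - ((j:ℕ):ℝ)| := by exact_mod_cast h1
    nlinarith
  · refine ⟨⟨1, by omega⟩, ⟨0, by omega⟩, show (1:ℕ) < n by omega,
      show (0:ℕ) < n by omega, by simp [Fin.ext_iff], ?_⟩
    have hsub : tPt k n hk τ ⟨1, by omega⟩ - tPt k n hk τ ⟨0, by omega⟩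
        = EuclideanSpace.single (⟨0, hk⟩ : Fin k) τ := by
      unfold tPt
      ext i
      simp [EuclideanSpace.single_apply]
      split <;> ring
    rw [hsub, EuclideanSpace.norm_single, Real.norm_eq_abs, abs_of_pos hτ0]
  · intro ω hω
    set i0 : Fin k := ⟨0, hk⟩ with hi0
    set θ : ℝ := τ * ω i0 with hθdef
    have hinner : ∀ j : Fin (2 * n - 1),
        (inner ℝ (tPt k n hk τ j) ω : ℝ) = ((j:ℕ):ℝ) * θ + (1 - (n:ℝ)) * θ := by
      intro j
      unfold tPt
      rw [EuclideanSpace.inner_single_left]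
      simp [hθdef]
      ring
    set f : Fin (2 * n - 1) → ℂ := fun j =>
      (mmin : ℂ) * (-1) ^ (j : ℕ) * ((2 * n - 2).choose (j : ℕ) : ℂ) *
        Complex.exp (Complex.I * ((inner ℝ (tPt k n hk τ j) ω : ℝ) : ℂ)) with hfdef
    have hsplit : ∑ j ∈ filter (fun j : Fin (2 * n - 1) => (j:ℕ) < n) univ, f j
        + ∑ j ∈ filter (fun j : Fin (2 * n - 1) => n ≤ (j:ℕ)) univ, f j
        = ∑ j ∈ univ, f j := by
      have h := Finset.sum_filter_add_sum_filter_not univ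
        (fun j : Fin (2 * n - 1) => (j:ℕ) < n) f
      have hfe : filter (fun j : Fin (2 * n - 1) => ¬ (j:ℕ) < n) univ
          = filter (fun j : Fin (2 * n - 1) => n ≤ (j:ℕ)) univ := by
        simp [not_lt]
      rw [hfe] at h
      exact h
    have hExpr : (∑ j ∈ filter (fun j : Fin (2 * n - 1) => n ≤ (j:ℕ)) univ,
          -((mmin : ℂ) * (-1) ^ (j : ℕ) * ((2 * n - 2).choose (j : ℕ) : ℂ)) *
            Complex.exp (Complex.I * ((inner ℝ (tPt k n hk τ j) ω : ℝ) : ℂ)))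
        - ∑ j ∈ filter (fun j : Fin (2 * n - 1) => (j:ℕ) < n) univ,
          ((mmin : ℂ) * (-1) ^ (j : ℕ) * ((2 * n - 2).choose (j : ℕ) : ℂ)) *
            Complex.exp (Complex.I * ((inner ℝ (tPt k n hk τ j) ω : ℝ) : ℂ))
        = -(∑ j ∈ univ, f j) := by
      rw [← hsplit]
      have : ∀ (t : Finset (Fin (2 * n - 1))), ∑ j ∈ t,
          -((mmin : ℂ) * (-1) ^ (j : ℕ) * ((2 * n - 2).choose (j : ℕ) : ℂ)) *
            Complex.exp (Complex.I * ((inner ℝ (tPt k n hk τ j) ω : ℝ) : ℂ))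
          = -∑ j ∈ t, f j := by
        intro t
        rw [← Finset.sum_neg_distrib]
        exact Finset.sum_congr rfl fun j _ => by simp [hfdef]
      rw [this]
      ring
    rw [hExpr, norm_neg]
    -- evaluate the total sum
    have hfj : ∀ j : Fin (2 * n - 1), f j
        = ((mmin : ℂ) * Complex.exp (Complex.I * (((1 - (n:ℝ)) * θ : ℝ) : ℂ))) *
          ((-Complex.exp (Complex.I * (θ : ℂ))) ^ (j:ℕ) * 1 ^ (2 * n - 2 - (j:ℕ)) *
            ((2 * n - 2).choose (j:ℕ) : ℂ)) := by
      intro j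
      rw [hfdef]
      simp only
      rw [hinner j]
      have hE : Complex.exp (Complex.I * ((((j:ℕ):ℝ) * θ + (1 - (n:ℝ)) * θ : ℝ) : ℂ))
          = Complex.exp (Complex.I * (((1 - (n:ℝ)) * θ : ℝ) : ℂ)) *
            Complex.exp (Complex.I * (θ : ℂ)) ^ (j:ℕ) := by
        rw [← Complex.exp_nat_mul, ← Complex.exp_add]
        congr 1
        push_cast
        ring
      rw [hE, neg_pow, one_pow]
      ring
    have hsum : ∑ j ∈ univ, f j
        = ((mmin : ℂ) * Complex.exp (Complex.I * (((1 - (n:ℝ)) * θ : ℝ) : ℂ))) *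
          ((-Complex.exp (Complex.I * (θ : ℂ)) + 1) ^ (2 * n - 2)) := by
      rw [Finset.sum_congr rfl fun j _ => hfj j, ← Finset.mul_sum]
      congr 1
      rw [Fin.sum_univ_eq_sum_range (fun j =>
        (-Complex.exp (Complex.I * (θ : ℂ))) ^ j * 1 ^ (2 * n - 2 - j) *
          ((2 * n - 2).choose j : ℂ))]
      have h21 : 2 * n - 1 = 2 * n - 2 + 1 := by omega
      rw [h21, ← add_pow]
    rw [hsum, norm_mul, norm_mul, Complex.norm_real, Real.norm_eq_abs, abs_of_pos hmm]
    have habs1 : ‖Complex.exp (Complex.I * (((1 - (n:ℝ)) * θ : ℝ) : ℂ))‖ = 1 := by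
      rw [Complex.norm_exp]
      simp
    rw [habs1, mul_one, norm_pow]
    -- bound |1 - e^{iθ}|
    have hω0 : |ω i0| ≤ Ω := by
      refine le_trans ?_ hω
      rw [EuclideanSpace.norm_eq, ← Real.sqrt_sq_eq_abs]
      apply Real.sqrt_le_sqrt
      have := Finset.single_le_sum (f := fun i => ‖ω i‖ ^ 2)
        (fun i _ => sq_nonneg _) (Finset.mem_univ i0)
      simpa [Real.norm_eq_abs, _root_.sq_abs] using this
    have hθb : |θ| ≤ τ * Ω := by
      rw [hθdef, abs_mul, abs_of_pos hτ0]
      exact mul_le_mul_of_nonneg_left hω0 hτ0.le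
    have hb : ‖-Complex.exp (Complex.I * (θ : ℂ)) + 1‖ ≤ τ * Ω := by
      rw [neg_add_eq_sub]
      exact le_trans (aux_exp θ) hθb
    have hpow : ‖-Complex.exp (Complex.I * (θ : ℂ)) + 1‖ ^ (2 * n - 2)
        ≤ (τ * Ω) ^ (2 * n - 2) :=
      pow_le_pow_left₀ (norm_nonneg _) hb _
    have hτΩ : τ * Ω = c * s := by
      rw [hτdef]; unfold tauVal
      rw [← hcdef, ← hsdef]
      field_simp
    have hm0 : ((2 * n - 2 : ℕ) : ℝ) = 2 * (n:ℝ) - 2 := by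
      have : (2:ℕ) ≤ 2 * n := by omega
      push_cast [Nat.cast_sub this]
      ring
    have hsm : s ^ (2 * n - 2) = σ / mmin := by
      rw [hsdef, ← Real.rpow_natCast ((σ / mmin) ^ ((1:ℝ) / (2 * (n:ℝ) - 2))) (2*n-2),
        ← Real.rpow_mul hsx.le]
      have hd : (2 * (n:ℝ) - 2) ≠ 0 := by
        have : (2:ℝ) ≤ (n:ℝ) := by exact_mod_cast hn
        nlinarith
      rw [hm0, one_div, inv_mul_cancel₀ hd, Real.rpow_one]
    have hcm : c ^ (2 * n - 2) < 1 := by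
      apply pow_lt_one₀ hc0.le hc1
      omega
    have hfin : mmin * (τ * Ω) ^ (2 * n - 2) < σ := by
      rw [hτΩ, mul_pow, hsm]
      have : mmin * (c ^ (2 * n - 2) * (σ / mmin)) = c ^ (2 * n - 2) * σ := by
        field_simp
      rw [this]
      nlinarith [pow_pos hc0 (2 * n - 2)]
    calc mmin * ‖-Complex.exp (Complex.I * (θ : ℂ)) + 1‖ ^ (2 * n - 2)
        ≤ mmin * (τ * Ω) ^ (2 * n - 2) := mul_le_mul_of_nonneg_left hpow hmm.le
      _ < σ := hfin
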